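/- Let I ⊆ ℝ be an open interval and let f : ℝ → ℝ be five times differentiable on I with f''(x) > 0 for all x ∈ I. Then the identity 9 f''(x)² f⁽⁵⁾(x) − 45 f''(x) f'''(x) f⁽⁴⁾(x) + 40 f'''(x)³ = 0 holds for all x ∈ I if and only if the third derivative of the function x ↦ f''(x)^{−2/3} vanishes identically on I. -/

import Mathlib

open Set

/-- Section 6, first equation of system (sys1): for `f` five times differentiable
on an open interval with `f'' > 0`, the ODE
`9 f''² f⁽⁵⁾ - 45 f'' f''' f⁽⁴⁾ + 40 f'''³ = 0` holds on the interval iff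
`(f''^{-2/3})''' = 0` on the interval. -/
theorem ode_iff_third_deriv_power_vanishes (a b : ℝ) (f : ℝ → ℝ)
    (hdiff : ∀ k ≤ 4, ∀ x ∈ Ioo a b, DifferentiableAt ℝ (deriv^[k] f) x)
    (hpos : ∀ x ∈ Ioo a b, 0 < deriv^[2] f x) :
    (∀ x ∈ Ioo a b,
        9 * (deriv^[2] f x) ^ 2 * deriv^[5] f x
          - 45 * deriv^[2] f x * deriv^[3] f x * deriv^[4] f x
          + 40 * (deriv^[3] f x) ^ 3 = 0) ↔
    (∀ x ∈ Ioo a b,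
        deriv^[3] (fun t => (deriv^[2] f t) ^ (-(2 : ℝ) / 3)) x = 0) := by
  set c : ℝ := -(2 : ℝ) / 3 with hc
  set g : ℝ → ℝ := deriv^[2] f with hg
  set g1 : ℝ → ℝ := deriv^[3] f with hg1
  set g2 : ℝ → ℝ := deriv^[4] f with hg2
  set g3 : ℝ → ℝ := deriv^[5] f with hg3
  have e1 : deriv g = g1 := (Function.iterate_succ_apply' deriv 2 f).symm
  have e2 : deriv g1 = g2 := (Function.iterate_succ_apply' deriv 3 f).symm
  have e3 : deriv g2 = g3 := (Function.iterate_succ_apply' deriv 4 f).symm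
  have hgD : ∀ x ∈ Ioo a b, HasDerivAt g (g1 x) x := by
    intro x hx
    have := (hdiff 2 (by norm_num) x hx).hasDerivAt
    rwa [show deriv (deriv^[2] f) x = g1 x by rw [← e1]] at this
  have hg1D : ∀ x ∈ Ioo a b, HasDerivAt g1 (g2 x) x := by
    intro x hx
    have := (hdiff 3 (by norm_num) x hx).hasDerivAt
    rwa [show deriv (deriv^[3] f) x = g2 x by rw [← e2]] at this
  have hg2D : ∀ x ∈ Ioo a b, HasDerivAt g2 (g3 x) x := by
    intro x hx
    have := (hdiff 4 (by norm_num) x hx).hasDerivAt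
    rwa [show deriv (deriv^[4] f) x = g3 x by rw [← e3]] at this
  set h : ℝ → ℝ := fun t => g t ^ c with hh
  set h1 : ℝ → ℝ := fun t => g1 t * c * g t ^ (c - 1) with hh1
  set h2 : ℝ → ℝ := fun t =>
    g2 t * c * g t ^ (c - 1) + g1 t * c * (g1 t * (c - 1) * g t ^ (c - 2)) with hh2
  set h3 : ℝ → ℝ := fun t =>
    c * (c - 1) * (c - 2) * g1 t ^ 3 * g t ^ (c - 3)
      + 3 * c * (c - 1) * g1 t * g2 t * g t ^ (c - 2)
      + c * g3 t * g t ^ (c - 1) with hh3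
  have step1 : ∀ x ∈ Ioo a b, HasDerivAt h (h1 x) x := fun x hx =>
    (hgD x hx).rpow_const (Or.inl (hpos x hx).ne')
  have step2 : ∀ x ∈ Ioo a b, HasDerivAt h1 (h2 x) x := by
    intro x hx
    have := ((hg1D x hx).mul_const c).mul
      ((hgD x hx).rpow_const (p := c - 1) (Or.inl (hpos x hx).ne'))
    refine this.congr_deriv ?_
    simp only [hh2]; ring
  have step3 : ∀ x ∈ Ioo a b, HasDerivAt h2 (h3 x) x := by
    intro x hx
    have hA :=
      ((hg2D x hx).mul_const c).mul
        ((hgD x hx).rpow_const (p := c - 1) (Or.inl (hpos x hx).ne'))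
    have hB :=
      ((hg1D x hx).mul_const c).mul
        (((hg1D x hx).mul_const (c - 1)).mul
          ((hgD x hx).rpow_const (p := c - 2) (Or.inl (hpos x hx).ne')))
    have := hA.add hB
    refine this.congr_deriv ?_
    have hpow : g x ^ (c - 2) = g x ^ (c - 3) * g x := by
      rw [show c - 2 = (c - 3) + 1 by ring, Real.rpow_add (hpos x hx), Real.rpow_one]
    simp only [hh3, Pi.mul_apply, show c - 1 - 1 = c - 2 by ring, show c - 2 - 1 = c - 3 by ring, hpow]
    ring
  have d1 : ∀ x ∈ Ioo a b, deriv h x = h1 x := fun x hx => (step1 x hx).deriv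
  have d2 : ∀ x ∈ Ioo a b, deriv^[2] h x = h2 x := by
    intro x hx
    rw [show deriv^[2] h x = deriv (deriv h) x from congrFun (Function.iterate_succ_apply' deriv 1 h) x]
    have heq : deriv h =ᶠ[nhds x] h1 :=
      Filter.eventuallyEq_of_mem (isOpen_Ioo.mem_nhds hx) fun y hy => d1 y hy
    rw [Filter.EventuallyEq.deriv_eq heq]
    exact (step2 x hx).deriv
  have d3 : ∀ x ∈ Ioo a b, deriv^[3] h x = h3 x := by
    intro x hx
    rw [show deriv^[3] h x = deriv (deriv^[2] h) x from congrFun (Function.iterate_succ_apply' deriv 2 h) x]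
    have heq : deriv^[2] h =ᶠ[nhds x] h2 :=
      Filter.eventuallyEq_of_mem (isOpen_Ioo.mem_nhds hx) fun y hy => d2 y hy
    rw [Filter.EventuallyEq.deriv_eq heq]
    exact (step3 x hx).deriv
  have key : ∀ x ∈ Ioo a b, h3 x =
      g x ^ (c - 3) * (-(2 : ℝ) / 27) *
        (9 * g x ^ 2 * g3 x - 45 * g x * g1 x * g2 x + 40 * g1 x ^ 3) := by
    intro x hx
    have p2 : g x ^ (c - 2) = g x ^ (c - 3) * g x := by
      rw [show c - 2 = (c - 3) + 1 by ring, Real.rpow_add (hpos x hx), Real.rpow_one]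
    have p1 : g x ^ (c - 1) = g x ^ (c - 3) * (g x * g x) := by
      rw [show c - 1 = ((c - 3) + 1) + 1 by ring, Real.rpow_add (hpos x hx),
        Real.rpow_add (hpos x hx), Real.rpow_one]
      ring
    simp only [hh3, p1, p2]; simp only [hc]
    ring
  have hpne : ∀ x ∈ Ioo a b, g x ^ (c - 3) ≠ 0 := fun x hx =>
    (Real.rpow_pos_of_pos (hpos x hx) _).ne'
  constructor
  · intro H x hx
    rw [d3 x hx, key x hx, H x hx, mul_zero]
  · intro H x hx
    have := (d3 x hx).symm.trans (H x hx)
    rw [key x hx] at this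
    rcases mul_eq_zero.mp this with h0 | h0
    · rcases mul_eq_zero.mp h0 with h0' | h0'
      · exact absurd h0' (hpne x hx)
      · norm_num at h0'
    · exact h0
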